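/- arXiv:2206.05543 — 8 statements merged into one kernel-verified Lean document; each statement's English description precedes it below -/
import Mathlib

section
/- Define f(x₁,x₂,x₃) = (4 + x₁ + x₂ + x₃)(3 - x₁ - x₂ - x₃) on X^H = [-1,1]³ \ (0,1]³. Then the minimum of f over X^H equals 6 and the maximum equals 49/4. -/
theorem stmt_2 :
    IsLeast ((fun p : ℝ × ℝ × ℝ =>
        (4 + p.1 + p.2.1 + p.2.2) * (3 - p.1 - p.2.1 - p.2.2)) ''
      {p : ℝ × ℝ × ℝ |
        (p.1 ∈ Set.Icc (-1:ℝ) 1 ∧ p.2.1 ∈ Set.Icc (-1:ℝ) 1 ∧ p.2.2 ∈ Set.Icc (-1:ℝ) 1) ∧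
        ¬(p.1 ∈ Set.Ioc (0:ℝ) 1 ∧ p.2.1 ∈ Set.Ioc (0:ℝ) 1 ∧ p.2.2 ∈ Set.Ioc (0:ℝ) 1)}) 6 ∧
    IsGreatest ((fun p : ℝ × ℝ × ℝ =>
        (4 + p.1 + p.2.1 + p.2.2) * (3 - p.1 - p.2.1 - p.2.2)) ''
      {p : ℝ × ℝ × ℝ |
        (p.1 ∈ Set.Icc (-1:ℝ) 1 ∧ p.2.1 ∈ Set.Icc (-1:ℝ) 1 ∧ p.2.2 ∈ Set.Icc (-1:ℝ) 1) ∧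
        ¬(p.1 ∈ Set.Ioc (0:ℝ) 1 ∧ p.2.1 ∈ Set.Ioc (0:ℝ) 1 ∧ p.2.2 ∈ Set.Ioc (0:ℝ) 1)})
      (49 / 4) := by
  constructor
  · constructor
    · exact ⟨(-1, -1, -1), by norm_num [Set.mem_Icc, Set.mem_Ioc]⟩
    · rintro v ⟨⟨x, y, z⟩, ⟨⟨hx, hy, hz⟩, hn⟩, rfl⟩
      simp only [Set.mem_Icc, Set.mem_Ioc] at hx hy hz hn
      show (6:ℝ) ≤ (4 + x + y + z) * (3 - x - y - z)
      have hs : x + y + z ≤ 2 := by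
        rcases le_or_gt x 0 with h | h
        · linarith [hy.2, hz.2]
        · rcases le_or_gt y 0 with h2 | h2
          · linarith [hx.2, hz.2]
          · have h3 : z ≤ 0 := by
              by_contra h3
              push_neg at h3
              exact hn ⟨⟨h, hx.2⟩, ⟨h2, hy.2⟩, ⟨h3, hz.2⟩⟩
            linarith [hx.2, hy.2]
      nlinarith [hx.1, hy.1, hz.1]
  · constructor
    · exact ⟨(-1/2, 0, 0), by norm_num [Set.mem_Icc, Set.mem_Ioc]⟩
    · rintro v ⟨⟨x, y, z⟩, ⟨⟨hx, hy, hz⟩, hn⟩, rfl⟩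
      show (4 + x + y + z) * (3 - x - y - z) ≤ 49 / 4
      nlinarith [sq_nonneg (x + y + z + 1/2)]
end

section
/- Suppose b > 1, b > |a|, and b - 2a + 1 > 0. For f_{a,b}(x₁,x₂) = (b + a(x₁+x₂) + x₁x₂)(2 - x₁ - x₂) restricted to X₁ = {(x₁,x₂) : -1 ≤ x₁ ≤ 0, -x₁ ≤ x₂ ≤ 1}, the minimum equals min{b+a, 2b-2}. -/
theorem stmt_7 (a b : ℝ) (hb : 1 < b) (hab : |a| < b) (hba : 0 < b - 2 * a + 1) :
    IsLeast ((fun p : ℝ × ℝ => (b + a * (p.1 + p.2) + p.1 * p.2) * (2 - p.1 - p.2)) ''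
        {p : ℝ × ℝ | -1 ≤ p.1 ∧ p.1 ≤ 0 ∧ -p.1 ≤ p.2 ∧ p.2 ≤ 1})
      (min (b + a) (2 * b - 2)) := by
  obtain ⟨ha1, ha2⟩ := abs_lt.mp hab
  constructor
  · rcases le_total (b + a) (2 * b - 2) with h | h
    · refine ⟨(0, 1), ⟨by norm_num, by norm_num, by norm_num, le_refl _⟩, ?_⟩
      simp [min_eq_left h]; ring
    · refine ⟨(-1, 1), ⟨le_refl _, by norm_num, by norm_num, le_refl _⟩, ?_⟩
      simp [min_eq_right h]; ring
  · rintro v ⟨⟨x, y⟩, ⟨hx1, hx2, hy1, hy2⟩, rfl⟩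
    simp only
    have hy0 : 0 ≤ y := le_trans (by linarith) hy1
    have hxy : x * y ≤ 0 := mul_nonpos_of_nonpos_of_nonneg hx2 hy0
    have h1 : (x - 1) * (y - 1) ≥ 0 := by nlinarith
    rcases le_total (b + a) (2 * b - 2) with h | h
    · rw [min_eq_left h]
      nlinarith [sq_nonneg (x + y), sq_nonneg (x + y - 1), mul_nonneg hy0 (by linarith : (0:ℝ) ≤ 1 - y), mul_nonneg (by linarith : (0:ℝ) ≤ -x) (by linarith : (0:ℝ) ≤ x + 1), mul_nonneg (by linarith : (0:ℝ) ≤ x + y) (by linarith : (0:ℝ) ≤ 1 - x - y)]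
    · rw [min_eq_right h]
      nlinarith [sq_nonneg (x + y), sq_nonneg (x + y - 1), mul_nonneg hy0 (by linarith : (0:ℝ) ≤ 1 - y), mul_nonneg (by linarith : (0:ℝ) ≤ -x) (by linarith : (0:ℝ) ≤ x + 1), mul_nonneg (by linarith : (0:ℝ) ≤ x + y) (by linarith : (0:ℝ) ≤ 1 - x - y)]
end

section
/- Suppose b > 1, b > |a|, and b - 2a + 1 > 0. For f_{a,b}(x₁,x₂) = (b + a(x₁+x₂) + x₁x₂)(2 - x₁ - x₂) restricted to X₁ = {(x₁,x₂) : -1 ≤ x₁ ≤ 0, -x₁ ≤ x₂ ≤ 1}, the maximum equals 2b if b ≥ 2a, and equals (b+2a)²/(4a) if b ≤ 2a. -/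
theorem stmt_8 (a b : ℝ) (hb : 1 < b) (hab : |a| < b) (hba : 0 < b - 2 * a + 1) :
    (2 * a ≤ b →
      IsGreatest ((fun p : ℝ × ℝ =>
          (b + a * (p.1 + p.2) + p.1 * p.2) * (2 - p.1 - p.2)) ''
        {p : ℝ × ℝ | -1 ≤ p.1 ∧ p.1 ≤ 0 ∧ -p.1 ≤ p.2 ∧ p.2 ≤ 1}) (2 * b)) ∧
    (b ≤ 2 * a →
      IsGreatest ((fun p : ℝ × ℝ =>
          (b + a * (p.1 + p.2) + p.1 * p.2) * (2 - p.1 - p.2)) ''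
        {p : ℝ × ℝ | -1 ≤ p.1 ∧ p.1 ≤ 0 ∧ -p.1 ≤ p.2 ∧ p.2 ≤ 1})
        ((b + 2 * a) ^ 2 / (4 * a))) := by
  have habs := abs_lt.mp hab
  constructor
  · intro h
    constructor
    · exact ⟨(0, 0), by norm_num, by norm_num; ring⟩
    · rintro v ⟨⟨x, y⟩, ⟨h1, h2, h3, h4⟩, rfl⟩
      simp only
      have ht0 : 0 ≤ x + y := by linarith
      have ht1 : x + y ≤ 1 := by linarith
      have hxy : x * y ≤ 0 := mul_nonpos_of_nonpos_of_nonneg h2 (by linarith)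
      have hkey : 0 ≤ b - 2 * a + a * (x + y) := by
        rcases le_or_gt a 0 with ha | ha
        · nlinarith
        · nlinarith
      nlinarith [mul_nonneg ht0 hkey, mul_nonpos_of_nonpos_of_nonneg hxy (by linarith : (0:ℝ) ≤ 2 - x - y)]
  · intro h
    have ha : 0 < a := by linarith
    have ha4 : (0:ℝ) < 4 * a := by linarith
    constructor
    · refine ⟨(0, (2 * a - b) / (2 * a)), ⟨le_refl (-1) |>.trans (by norm_num), le_refl 0, ?_, ?_⟩, ?_⟩
      · simp
        apply div_nonneg <;> linarith
      · rw [div_le_one (by linarith)]; linarith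
      · simp only
        field_simp
        ring
    · rintro v ⟨⟨x, y⟩, ⟨h1, h2, h3, h4⟩, rfl⟩
      simp only
      rw [le_div_iff₀ ha4]
      have ht0 : 0 ≤ x + y := by linarith
      have ht1 : x + y ≤ 1 := by linarith
      have hxy : x * y ≤ 0 := mul_nonpos_of_nonpos_of_nonneg h2 (by linarith)
      nlinarith [sq_nonneg (2 * a * (x + y) - (2 * a - b)),
        mul_nonpos_of_nonpos_of_nonneg hxy (by linarith : (0:ℝ) ≤ 2 - x - y)]
end

section
/- Suppose b > 1 and b - 2a + 1 > 0. For f_{a,b}(x₁,x₂) = (b + a(x₁+x₂) + x₁x₂)(2 - x₁ - x₂) restricted to X₂ = {(x₁,x₂) : -1 ≤ x₁ ≤ 0, x₁ ≤ x₂ ≤ -x₁}, the minimum equals min{4(b - 2a + 1), 2b - 2}. -/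
theorem stmt_9 (a b : ℝ) (hb : 1 < b) (hba : 0 < b - 2 * a + 1) :
    IsLeast ((fun p : ℝ × ℝ => (b + a * (p.1 + p.2) + p.1 * p.2) * (2 - p.1 - p.2)) ''
        {p : ℝ × ℝ | -1 ≤ p.1 ∧ p.1 ≤ 0 ∧ p.1 ≤ p.2 ∧ p.2 ≤ -p.1})
      (min (4 * (b - 2 * a + 1)) (2 * b - 2)) := by
  constructor
  · rcases le_total (4 * (b - 2 * a + 1)) (2 * b - 2) with h | h
    · refine ⟨(-1, -1), by norm_num, ?_⟩
      rw [min_eq_left h]; norm_num; ring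
    · refine ⟨(-1, 1), by norm_num, ?_⟩
      rw [min_eq_right h]; norm_num; ring
  · rintro v ⟨⟨x, y⟩, ⟨h1, h2, h3, h4⟩, rfl⟩
    simp only at *
    have key : (1 + x) * (1 + y) ≥ 0 :=
      mul_nonneg (by linarith) (by linarith)
    have hs : 2 - x - y ≥ 0 := by nlinarith
    have hs2 : x + y ≥ -2 := by linarith
    have hs0 : x + y ≤ 0 := by linarith
    have step : (b + a * (x + y) + x * y) * (2 - x - y) ≥
        (b + a * (x + y) - (x + y) - 1) * (2 - x - y) := by
      have : x * y ≥ -(x + y) - 1 := by nlinarith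
      nlinarith
    rcases le_total (4 * (b - 2 * a + 1)) (2 * b - 2) with h | h
    · rw [min_eq_left h]
      nlinarith [mul_nonneg (show (0:ℝ) ≤ x + y + 2 by linarith) (show (0:ℝ) ≤ -(x+y) by linarith), mul_nonneg (show (0:ℝ) ≤ x + y + 2 by linarith) (show (0:ℝ) ≤ 4*(a-1) - (b-1) by linarith)]
    · rw [min_eq_right h]
      nlinarith [mul_nonneg (show (0:ℝ) ≤ -(x+y) by linarith) (show (0:ℝ) ≤ x + y + 2 by linarith), mul_nonneg (show (0:ℝ) ≤ -(x+y) by linarith) (show (0:ℝ) ≤ b - 1 by linarith), mul_nonneg (show (0:ℝ) ≤ -(x+y) by linarith) (show (0:ℝ) ≤ b + 3 - 4*a by linarith)]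
end

section
/- For t ∈ [1,2] and a ∈ [(3t+2)/4, 2], with w₁(t,a) = (2t+3)a - (3t²/4 + t), w₂(t,a) = (4t+4)a - (3t²/2 + 2t + 2), w₃(t,a) = 8ta - (3t² + 4t - 4), and W(t,a) = ((t+2)a - (t²/2 + t))(t+2), one has min{w₁,w₂,w₃} = w₁ and w₁(t,a)/W(t,a) ≤ 2/3. -/
theorem stmt_12 (t a : ℝ) (ht : t ∈ Set.Icc (1:ℝ) 2)
    (ha : a ∈ Set.Icc ((3 * t + 2) / 4) 2) :
    min (min ((2 * t + 3) * a - (3 * t ^ 2 / 4 + t))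
          ((4 * t + 4) * a - (3 * t ^ 2 / 2 + 2 * t + 2)))
        (8 * t * a - (3 * t ^ 2 + 4 * t - 4))
      = (2 * t + 3) * a - (3 * t ^ 2 / 4 + t) ∧
    ((2 * t + 3) * a - (3 * t ^ 2 / 4 + t)) /
        (((t + 2) * a - (t ^ 2 / 2 + t)) * (t + 2)) ≤ 2 / 3 := by
  obtain ⟨ht1, ht2⟩ := ht
  obtain ⟨ha1, ha2⟩ := ha
  have h12 : (2 * t + 3) * a - (3 * t ^ 2 / 4 + t) ≤
      (4 * t + 4) * a - (3 * t ^ 2 / 2 + 2 * t + 2) := by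
    nlinarith [mul_nonneg (sub_nonneg.2 ht1) (sub_nonneg.2 ht2)]
  have h13 : (2 * t + 3) * a - (3 * t ^ 2 / 4 + t) ≤
      8 * t * a - (3 * t ^ 2 + 4 * t - 4) := by
    nlinarith [mul_nonneg (sub_nonneg.2 ht1) (sub_nonneg.2 ht2),
      mul_nonneg (sub_nonneg.2 ht1) (sub_nonneg.2 ha2)]
  have hW : 0 < ((t + 2) * a - (t ^ 2 / 2 + t)) * (t + 2) := by nlinarith
  refine ⟨by rw [min_eq_left h12, min_eq_left h13], ?_⟩
  rw [div_le_iff₀ hW]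
  nlinarith [mul_nonneg (sub_nonneg.2 ht1) (sub_nonneg.2 ht2),
    mul_nonneg (sub_nonneg.2 ht1) (sub_nonneg.2 ha2),
    mul_nonneg (mul_nonneg (sub_nonneg.2 ht1) (sub_nonneg.2 ht1)) (sub_nonneg.2 ht1)]
end

section
/- For t ∈ [0, (14 - 4√10)/9], we have 8(2+3t)/((12 + 4t - t²)(2+t)) ≤ (68 - 5√10)/72, with equality at t = (14 - 4√10)/9. -/
theorem stmt_14 :
    (∀ t : ℝ, t ∈ Set.Icc (0:ℝ) ((14 - 4 * Real.sqrt 10) / 9) →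
      8 * (2 + 3 * t) / ((12 + 4 * t - t ^ 2) * (2 + t))
        ≤ (68 - 5 * Real.sqrt 10) / 72) ∧
    8 * (2 + 3 * ((14 - 4 * Real.sqrt 10) / 9)) /
        ((12 + 4 * ((14 - 4 * Real.sqrt 10) / 9) - ((14 - 4 * Real.sqrt 10) / 9) ^ 2) *
          (2 + (14 - 4 * Real.sqrt 10) / 9))
      = (68 - 5 * Real.sqrt 10) / 72 := by
  have hs2 : Real.sqrt 10 ^ 2 = 10 := Real.sq_sqrt (by norm_num)
  have hs1 : (3.16:ℝ) ≤ Real.sqrt 10 := by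
    nlinarith [Real.sq_sqrt (show (0:ℝ) ≤ 10 by norm_num), Real.sqrt_nonneg 10]
  have hs3 : Real.sqrt 10 ≤ 3.17 := by
    nlinarith [Real.sq_sqrt (show (0:ℝ) ≤ 10 by norm_num), Real.sqrt_nonneg 10]
  constructor
  · intro t ht
    obtain ⟨h0, h1⟩ := ht
    set s := Real.sqrt 10 with hs
    have ht1 : t ≤ 0.16 := by nlinarith
    have hden : (0:ℝ) < (12 + 4 * t - t ^ 2) * (2 + t) := by nlinarith
    rw [div_le_div_iff₀ hden (by norm_num)]
    nlinarith [sq_nonneg t, sq_nonneg (t - (14 - 4*s)/9), mul_nonneg h0 (sub_nonneg.2 h1),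
      mul_nonneg (mul_nonneg h0 h0) (sub_nonneg.2 h1), sq_nonneg (s - 3.16)]
  · set s := Real.sqrt 10 with hs
    have hden : (0:ℝ) < ((12 + 4 * ((14 - 4 * s) / 9) - ((14 - 4 * s) / 9) ^ 2) *
          (2 + (14 - 4 * s) / 9)) := by nlinarith
    rw [div_eq_div_iff hden.ne' (by norm_num)]
    linear_combination (-1408/729 - 6272/729 * s + 320/729 * s^2) * hs2
end

section
/- For t ∈ [(14 - 4√10)/9, 1/2], we have 6(t+2)/(-t³ + 12t + 16) ≤ (68 - 5√10)/72. -/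
theorem stmt_15 (t : ℝ)
    (ht : t ∈ Set.Icc ((14 - 4 * Real.sqrt 10) / 9) (1/2 : ℝ)) :
    6 * (t + 2) / (-t ^ 3 + 12 * t + 16) ≤ (68 - 5 * Real.sqrt 10) / 72 := by
  obtain ⟨h1, h2⟩ := ht
  set s := Real.sqrt 10 with hs
  have hs2 : s ^ 2 = 10 := Real.sq_sqrt (by norm_num)
  have hs3 : 3 ≤ s := by
    nlinarith [Real.sqrt_nonneg 10, hs2]
  have hs4 : s ≤ 3.2 := by
    nlinarith [Real.sqrt_nonneg 10, hs2]
  have ht0 : (0.1 : ℝ) ≤ t := by nlinarith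
  have hD : (0 : ℝ) < -t ^ 3 + 12 * t + 16 := by
    have : -t ^ 3 + 12 * t + 16 = (t + 2)^2 * (4 - t) := by ring
    rw [this]
    have h4 : (0:ℝ) < 4 - t := by linarith
    nlinarith [sq_nonneg (t+2)]
  rw [div_le_div_iff₀ hD (by norm_num)]
  nlinarith [mul_nonneg (mul_nonneg (sub_nonneg.2 h1) (by nlinarith : (0:ℝ) ≤ (4 + 4*s)/9 - t)) (by nlinarith : (0:ℝ) ≤ t + 2), sq_nonneg (t - (14 - 4*s)/9), sq_nonneg s]
end

section
/- For a = 5/3, b = 11/3, and f(x₁,x₂) = (11/3 + (5/3)(x₁+x₂) + x₁x₂)(2 - x₁ - x₂) on X^H = [-1,1]² \ (0,1]², the minimum of f over X^H equals 16/3 and the maximum equals (4352 + 320√10)/729. -/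
theorem stmt_16 :
    IsLeast ((fun p : ℝ × ℝ =>
        (11/3 + (5/3) * (p.1 + p.2) + p.1 * p.2) * (2 - p.1 - p.2)) ''
      {p : ℝ × ℝ |
        (p.1 ∈ Set.Icc (-1:ℝ) 1 ∧ p.2 ∈ Set.Icc (-1:ℝ) 1) ∧
        ¬(p.1 ∈ Set.Ioc (0:ℝ) 1 ∧ p.2 ∈ Set.Ioc (0:ℝ) 1)}) (16/3) ∧
    IsGreatest ((fun p : ℝ × ℝ =>
        (11/3 + (5/3) * (p.1 + p.2) + p.1 * p.2) * (2 - p.1 - p.2)) ''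
      {p : ℝ × ℝ |
        (p.1 ∈ Set.Icc (-1:ℝ) 1 ∧ p.2 ∈ Set.Icc (-1:ℝ) 1) ∧
        ¬(p.1 ∈ Set.Ioc (0:ℝ) 1 ∧ p.2 ∈ Set.Ioc (0:ℝ) 1)})
      ((4352 + 320 * Real.sqrt 10) / 729) := by
  have hr2 : Real.sqrt 10 ^ 2 = 10 := Real.sq_sqrt (by norm_num)
  have hr3 : (3:ℝ) ≤ Real.sqrt 10 := by
    nlinarith [Real.sqrt_nonneg 10, hr2]
  have hr4 : Real.sqrt 10 ≤ 7/2 := by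
    nlinarith [Real.sqrt_nonneg 10, hr2]
  constructor
  · constructor
    · exact ⟨(1, 0), ⟨⟨by norm_num, by norm_num⟩, by norm_num⟩, by norm_num⟩
    · rintro v ⟨⟨x, y⟩, ⟨⟨⟨hx1, hx2⟩, ⟨hy1, hy2⟩⟩, hne⟩, rfl⟩
      simp only [Set.mem_Ioc, not_and, not_le] at hne
      -- either x ≤ 0 or y ≤ 0
      rcases le_or_gt x 0 with hx0 | hx0
      · nlinarith [mul_nonneg (sub_nonneg.2 hy2) (neg_nonneg.2 hx0),
          mul_nonneg (by linarith : (0:ℝ) ≤ y + 1) (neg_nonneg.2 hx0),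
          mul_nonneg (mul_nonneg (sub_nonneg.2 hy2) (neg_nonneg.2 hx0)) (sub_nonneg.2 hx2),
          mul_nonneg (sub_nonneg.2 hx2) (sub_nonneg.2 hy2),
          mul_nonneg (by linarith : (0:ℝ) ≤ x + 1) (by linarith : (0:ℝ) ≤ y + 1),
          mul_nonneg (mul_nonneg (by linarith : (0:ℝ) ≤ x + 1) (by linarith : (0:ℝ) ≤ y + 1)) (neg_nonneg.2 hx0),
          mul_nonneg (sub_nonneg.2 hy2) (by linarith : (0:ℝ) ≤ x + 1),
          mul_nonneg (sub_nonneg.2 hx2) (by linarith : (0:ℝ) ≤ y + 1)]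
      · have hy0 : y ≤ 0 := by
          by_contra h
          push_neg at h
          exact absurd (hne ⟨hx0, hx2⟩ h) (not_lt.2 hy2)
        nlinarith [mul_nonneg (sub_nonneg.2 hx2) (neg_nonneg.2 hy0),
          mul_nonneg (mul_nonneg (sub_nonneg.2 hx2) (neg_nonneg.2 hy0)) (sub_nonneg.2 hy2),
          mul_nonneg (sub_nonneg.2 hx2) (sub_nonneg.2 hy2),
          mul_nonneg (by linarith : (0:ℝ) ≤ x + 1) (by linarith : (0:ℝ) ≤ y + 1),
          mul_nonneg (mul_nonneg (by linarith : (0:ℝ) ≤ x + 1) (by linarith : (0:ℝ) ≤ y + 1)) (neg_nonneg.2 hy0),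
          mul_nonneg (sub_nonneg.2 hy2) (by linarith : (0:ℝ) ≤ x + 1),
          mul_nonneg (sub_nonneg.2 hx2) (by linarith : (0:ℝ) ≤ y + 1)]
  · constructor
    · refine ⟨((2 * Real.sqrt 10 - 7) / 9, (2 * Real.sqrt 10 - 7) / 9), ⟨⟨⟨?_, ?_⟩, ⟨?_, ?_⟩⟩, ?_⟩, ?_⟩
      · nlinarith
      · nlinarith
      · nlinarith
      · nlinarith
      · simp only [Set.mem_Ioc, not_and, not_le]
        intro h
        exfalso
        nlinarith [h.1]
      · show (11/3 + (5/3) * ((2 * Real.sqrt 10 - 7) / 9 + (2 * Real.sqrt 10 - 7) / 9) +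
            (2 * Real.sqrt 10 - 7) / 9 * ((2 * Real.sqrt 10 - 7) / 9)) *
            (2 - (2 * Real.sqrt 10 - 7) / 9 - (2 * Real.sqrt 10 - 7) / 9) =
            (4352 + 320 * Real.sqrt 10) / 729
        linear_combination (-(16/729) * Real.sqrt 10) * hr2
    · rintro v ⟨⟨x, y⟩, ⟨⟨⟨hx1, hx2⟩, ⟨hy1, hy2⟩⟩, hne⟩, rfl⟩
      have key : (0:ℝ) ≤ (9 * (x + y) - (4 * Real.sqrt 10 - 14))^2 *
          (9 * (x + y) + 8 * Real.sqrt 10 + 14) := by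
        apply mul_nonneg (sq_nonneg _)
        nlinarith
      nlinarith [sq_nonneg (x - y), key, hr2, sq_nonneg (x + y)]
end
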